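/- arXiv:1810.12970 — 2 statements merged into one kernel-verified Lean document; each statement's English description precedes it below -/
import Mathlib

section
/- Let E and F be Banach spaces over 𝕜 (= ℝ or ℂ) and let m, n, k ≥ 1. The correspondence Δ_k^n : 𝒫(^mE;F) → 𝒫(^n 𝒫(^kF); 𝒫(^{mnk}E)), P ↦ Δ_k^n P, is a continuous kn-homogeneous polynomial (it is generated by the continuous kn-linear map A(P₁,…,P_{kn})(q)(x) = q̌(P₁(x),…,P_k(x)) ⋯ q̌(P_{(n-1)k+1}(x),…,P_{kn}(x))), and if E ≠ {0} and F ≠ {0} then ‖Δ_k^n‖ = 1. -/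
open scoped NNReal ENNReal

/-- `P : E → F` is a continuous `m`-homogeneous polynomial: it is generated by a
continuous `m`-linear map. -/
def IsHomPoly (𝕜 : Type*) [RCLike 𝕜] (m : ℕ) {E F : Type*}
    [NormedAddCommGroup E] [NormedSpace 𝕜 E] [NormedAddCommGroup F] [NormedSpace 𝕜 F]
    (P : E → F) : Prop :=
  ∃ A : ContinuousMultilinearMap 𝕜 (fun _ : Fin m => E) F, ∀ x, P x = A (fun _ => x)

/-- The sup norm over the closed unit ball. -/
noncomputable def polyNorm {E F : Type*} [Norm E] [Norm F] (P : E → F) : ℝ :=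
  sSup ((fun x => ‖P x‖) '' {x : E | ‖x‖ ≤ 1})

/-- The space `𝒫(^m E; F)` of continuous `m`-homogeneous polynomials. -/
structure HPoly (𝕜 : Type*) [RCLike 𝕜] (m : ℕ) (E F : Type*)
    [NormedAddCommGroup E] [NormedSpace 𝕜 E] [NormedAddCommGroup F] [NormedSpace 𝕜 F] where
  toFun : E → F
  isPoly' : IsHomPoly 𝕜 m toFun

namespace HPoly

variable {𝕜 : Type*} [RCLike 𝕜] {m : ℕ} {E F : Type*}
  [NormedAddCommGroup E] [NormedSpace 𝕜 E] [NormedAddCommGroup F] [NormedSpace 𝕜 F]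

instance : FunLike (HPoly 𝕜 m E F) E F where
  coe P := P.toFun
  coe_injective := by rintro ⟨f, hf⟩ ⟨g, hg⟩ h; simpa using h

@[ext] theorem ext {P Q : HPoly 𝕜 m E F} (h : ∀ x, P x = Q x) : P = Q := DFunLike.ext _ _ h

theorem isPoly (P : HPoly 𝕜 m E F) : IsHomPoly 𝕜 m ⇑P := P.isPoly'

instance : Zero (HPoly 𝕜 m E F) := ⟨⟨fun _ => 0, ⟨0, by simp⟩⟩⟩

@[simp] theorem zero_apply (x : E) : (0 : HPoly 𝕜 m E F) x = 0 := rfl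

instance : Add (HPoly 𝕜 m E F) :=
  ⟨fun P Q => ⟨fun x => P x + Q x, by
    obtain ⟨A, hA⟩ := P.isPoly'
    obtain ⟨B, hB⟩ := Q.isPoly'
    refine ⟨A + B, fun x => ?_⟩
    show P.toFun x + Q.toFun x = (A + B) fun _ => x
    rw [ContinuousMultilinearMap.add_apply, hA x, hB x]⟩⟩

@[simp] theorem add_apply (P Q : HPoly 𝕜 m E F) (x : E) : (P + Q) x = P x + Q x := rfl

instance : Neg (HPoly 𝕜 m E F) :=
  ⟨fun P => ⟨fun x => -P x, by
    obtain ⟨A, hA⟩ := P.isPoly'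
    refine ⟨-A, fun x => ?_⟩
    show -P.toFun x = (-A) fun _ => x
    rw [ContinuousMultilinearMap.neg_apply, hA x]⟩⟩

@[simp] theorem neg_apply (P : HPoly 𝕜 m E F) (x : E) : (-P) x = -P x := rfl

instance : SMul 𝕜 (HPoly 𝕜 m E F) :=
  ⟨fun c P => ⟨fun x => c • P x, by
    obtain ⟨A, hA⟩ := P.isPoly'
    refine ⟨c • A, fun x => ?_⟩
    show c • P.toFun x = (c • A) fun _ => x
    rw [ContinuousMultilinearMap.smul_apply, hA x]⟩⟩

@[simp] theorem smul_apply (c : 𝕜) (P : HPoly 𝕜 m E F) (x : E) : (c • P) x = c • P x := rfl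

instance : AddCommGroup (HPoly 𝕜 m E F) where
  add_assoc P Q R := by ext x; simp [add_assoc]
  zero_add P := by ext x; simp
  add_zero P := by ext x; simp
  add_comm P Q := by ext x; simp [add_comm]
  neg_add_cancel P := by ext x; simp
  nsmul := nsmulRec
  zsmul := zsmulRec

instance : Module 𝕜 (HPoly 𝕜 m E F) where
  one_smul P := by ext x; simp
  mul_smul a b P := by ext x; simp [mul_smul]
  smul_zero a := by ext x; simp
  smul_add a P Q := by ext x; simp
  add_smul a b P := by ext x; simp [add_smul]
  zero_smul P := by ext x; simp

theorem bddAbove_image (P : HPoly 𝕜 m E F) :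
    BddAbove ((fun x => ‖P x‖) '' {x : E | ‖x‖ ≤ 1}) := by
  obtain ⟨A, hA⟩ := P.isPoly'
  refine ⟨‖A‖, ?_⟩
  rintro r ⟨x, hx, rfl⟩
  show ‖P.toFun x‖ ≤ ‖A‖
  rw [hA x]
  calc ‖A fun _ => x‖ ≤ ‖A‖ * ∏ _i : Fin m, ‖x‖ := A.le_opNorm _
    _ ≤ ‖A‖ * 1 := by
        refine mul_le_mul_of_nonneg_left ?_ (norm_nonneg A)
        rw [Finset.prod_const]
        exact pow_le_one₀ (norm_nonneg x) hx
    _ = ‖A‖ := mul_one _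

theorem polyNorm_coe_nonneg (P : HPoly 𝕜 m E F) : 0 ≤ polyNorm ⇑P :=
  le_trans (norm_nonneg (P 0)) (le_csSup (bddAbove_image P) ⟨0, by simp, rfl⟩)

noncomputable instance : NormedAddCommGroup (HPoly 𝕜 m E F) :=
  AddGroupNorm.toNormedAddCommGroup
    { toFun := fun P => polyNorm (⇑P)
      map_zero' := by
        simp only [polyNorm]
        have h : (fun x : E => ‖(0 : HPoly 𝕜 m E F) x‖) '' {x : E | ‖x‖ ≤ 1} = {0} := by
          apply Set.eq_singleton_iff_nonempty_unique_mem.2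
          constructor
          · exact ⟨0, ⟨0, by simp, by simp⟩⟩
          · rintro r ⟨x, -, rfl⟩; simp
        rw [h, csSup_singleton]
      add_le' := fun P Q => by
        apply Real.sSup_le
        · rintro r ⟨x, hx, rfl⟩
          calc ‖(P + Q) x‖ ≤ ‖P x‖ + ‖Q x‖ := norm_add_le _ _
            _ ≤ polyNorm ⇑P + polyNorm ⇑Q :=
                add_le_add (le_csSup (bddAbove_image P) ⟨x, hx, rfl⟩)
                  (le_csSup (bddAbove_image Q) ⟨x, hx, rfl⟩)
        · exact add_nonneg (polyNorm_coe_nonneg P) (polyNorm_coe_nonneg Q)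
      neg' := fun P => by simp [polyNorm]
      eq_zero_of_map_eq_zero' := fun P h => by
        have h' : polyNorm ⇑P = 0 := h
        have hball : ∀ x : E, ‖x‖ ≤ 1 → P x = 0 := by
          intro x hx
          have h1 : ‖P x‖ ≤ polyNorm ⇑P := le_csSup (bddAbove_image P) ⟨x, hx, rfl⟩
          rw [h'] at h1
          exact norm_le_zero_iff.1 h1
        ext x
        rcases eq_or_ne x 0 with rfl | hx
        · simpa using hball 0 (by simp)
        · obtain ⟨A, hA⟩ := P.isPoly'
          set c : 𝕜 := ((‖x‖ : ℝ) : 𝕜) with hcdef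
          have hc : c ≠ 0 := by
            simp only [hcdef, ne_eq, RCLike.ofReal_eq_zero]
            exact norm_ne_zero_iff.2 hx
          have hu : ‖(c⁻¹ • x : E)‖ ≤ 1 := by
            rw [norm_smul, norm_inv, hcdef, RCLike.norm_ofReal,
              abs_of_nonneg (norm_nonneg x),
              inv_mul_cancel₀ (norm_ne_zero_iff.2 hx)]
          have h0 : P (c⁻¹ • x) = 0 := hball _ hu
          have key : P x = c ^ m • P (c⁻¹ • x) := by
            show P.toFun x = c ^ m • P.toFun (c⁻¹ • x)
            rw [hA x, hA (c⁻¹ • x)]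
            have h2 := A.map_smul_univ (fun _ : Fin m => c) (fun _ : Fin m => c⁻¹ • x)
            rw [Finset.prod_const] at h2
            have h3 : (fun _ : Fin m => c • c⁻¹ • x) = fun _ : Fin m => x := by
              funext i
              rw [smul_smul, mul_inv_cancel₀ hc, one_smul]
            rw [h3] at h2
            simpa using h2
          rw [key, h0, smul_zero]
          simp }

theorem norm_def (P : HPoly 𝕜 m E F) : ‖P‖ = polyNorm ⇑P := rfl

noncomputable instance : NormedSpace 𝕜 (HPoly 𝕜 m E F) :=
  { (inferInstance : Module 𝕜 (HPoly 𝕜 m E F)) with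
    norm_smul_le := fun c P => by
      show polyNorm ⇑(c • P) ≤ ‖c‖ * polyNorm ⇑P
      apply Real.sSup_le
      · rintro r ⟨x, hx, rfl⟩
        show ‖(c • P) x‖ ≤ _
        rw [smul_apply, norm_smul]
        exact mul_le_mul_of_nonneg_left
          (le_csSup (bddAbove_image P) ⟨x, hx, rfl⟩) (norm_nonneg c)
      · exact mul_nonneg (norm_nonneg c) (polyNorm_coe_nonneg P) }

end HPoly


section Statement2Aux

variable {𝕜 : Type*} [RCLike 𝕜] {E F G H : Type*}
  [NormedAddCommGroup E] [NormedSpace 𝕜 E] [NormedAddCommGroup F] [NormedSpace 𝕜 F]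
  [NormedAddCommGroup G] [NormedSpace 𝕜 G] [NormedAddCommGroup H] [NormedSpace 𝕜 H]

namespace HPoly

theorem le_polyNorm {m : ℕ} (P : HPoly 𝕜 m E F) {x : E} (hx : ‖x‖ ≤ 1) : ‖P x‖ ≤ ‖P‖ :=
  le_csSup (bddAbove_image P) ⟨x, hx, rfl⟩

theorem polyNorm_le {m : ℕ} (P : HPoly 𝕜 m E F) {C : ℝ} (hC : 0 ≤ C)
    (h : ∀ x : E, ‖x‖ ≤ 1 → ‖P x‖ ≤ C) : ‖P‖ ≤ C := by
  refine Real.sSup_le ?_ hC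
  rintro r ⟨x, hx, rfl⟩
  exact h x hx

theorem map_smul_pow {m : ℕ} (P : HPoly 𝕜 m E F) (c : 𝕜) (x : E) :
    P (c • x) = c ^ m • P x := by
  obtain ⟨A, hA⟩ := P.isPoly
  rw [hA, hA]
  have h2 := A.toMultilinearMap.map_smul_univ (fun _ : Fin m => c) (fun _ : Fin m => x)
  simp only [Finset.prod_const, Finset.card_univ, Fintype.card_fin] at h2
  exact h2

theorem norm_apply_le {m : ℕ} (hm : 1 ≤ m) (P : HPoly 𝕜 m E F) (x : E) :
    ‖P x‖ ≤ ‖P‖ * ‖x‖ ^ m := by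
  rcases eq_or_ne x 0 with rfl | hx
  · have h := map_smul_pow P 0 0
    rw [smul_zero, zero_pow (show m ≠ 0 by omega), zero_smul] at h
    simp [h, zero_pow (show m ≠ 0 by omega)]
  · have hc : ((‖x‖ : ℝ) : 𝕜) ≠ 0 := by
      simpa [RCLike.ofReal_eq_zero] using norm_ne_zero_iff.2 hx
    have hu : ‖(((‖x‖ : ℝ) : 𝕜))⁻¹ • x‖ ≤ 1 := by
      rw [norm_smul, norm_inv, RCLike.norm_ofReal, abs_of_nonneg (norm_nonneg x),
        inv_mul_cancel₀ (norm_ne_zero_iff.2 hx)]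
    have hxx : ((‖x‖ : ℝ) : 𝕜) • (((‖x‖ : ℝ) : 𝕜))⁻¹ • x = x := by
      rw [smul_smul, mul_inv_cancel₀ hc, one_smul]
    calc ‖P x‖ = ‖P (((‖x‖ : ℝ) : 𝕜) • (((‖x‖ : ℝ) : 𝕜))⁻¹ • x)‖ := by rw [hxx]
      _ = ‖(((‖x‖ : ℝ) : 𝕜)) ^ m • P ((((‖x‖ : ℝ) : 𝕜))⁻¹ • x)‖ := by rw [map_smul_pow]
      _ = ‖x‖ ^ m * ‖P ((((‖x‖ : ℝ) : 𝕜))⁻¹ • x)‖ := by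
          rw [norm_smul, norm_pow, RCLike.norm_ofReal, abs_of_nonneg (norm_nonneg x)]
      _ ≤ ‖x‖ ^ m * ‖P‖ := mul_le_mul_of_nonneg_left (le_polyNorm P hu) (by positivity)
      _ = ‖P‖ * ‖x‖ ^ m := mul_comm _ _

end HPoly

namespace Statement2

variable (𝕜) in
/-- The sign `±1` attached to a boolean. -/
def sgn (b : Bool) : 𝕜 := if b then 1 else -1

@[simp] lemma norm_sgn (b : Bool) : ‖sgn 𝕜 b‖ = 1 := by
  cases b <;> simp [sgn]

lemma coeff_sum {k : ℕ} (f : Fin k → Fin k) :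
    ∑ ε : Fin k → Bool, ((∏ i, sgn 𝕜 (ε i)) * ∏ j, sgn 𝕜 (ε (f j)))
      = if Function.Bijective f then (2 ^ k : 𝕜) else 0 := by
  have key : ∀ ε : Fin k → Bool,
      ((∏ i, sgn 𝕜 (ε i)) * ∏ j, sgn 𝕜 (ε (f j)))
        = ∏ i, sgn 𝕜 (ε i) ^ ((Finset.univ.filter (fun j => f j = i)).card + 1) := by
    intro ε
    have h1 : (∏ j, sgn 𝕜 (ε (f j)))
        = ∏ i, sgn 𝕜 (ε i) ^ (Finset.univ.filter (fun j => f j = i)).card := by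
      rw [← Finset.prod_fiberwise Finset.univ f (fun j => sgn 𝕜 (ε (f j)))]
      refine Finset.prod_congr rfl fun i _ => ?_
      calc ∏ j ∈ Finset.univ.filter (fun j => f j = i), sgn 𝕜 (ε (f j))
          = ∏ _j ∈ Finset.univ.filter (fun j => f j = i), sgn 𝕜 (ε i) :=
            Finset.prod_congr rfl (fun j hj => by rw [(Finset.mem_filter.1 hj).2])
        _ = sgn 𝕜 (ε i) ^ (Finset.univ.filter (fun j => f j = i)).card :=
            Finset.prod_const _
    rw [h1, ← Finset.prod_mul_distrib]
    exact Finset.prod_congr rfl fun i _ => (pow_succ' _ _).symm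
  simp only [key]
  rw [← Fintype.prod_sum (f := fun (i : Fin k) (b : Bool) =>
    sgn 𝕜 b ^ ((Finset.univ.filter (fun j => f j = i)).card + 1))]
  by_cases hbij : Function.Bijective f
  · have hd : ∀ i, (Finset.univ.filter (fun j => f j = i)).card = 1 := by
      intro i
      obtain ⟨j₀, hj₀⟩ := hbij.surjective i
      rw [Finset.card_eq_one]
      refine ⟨j₀, Finset.eq_singleton_iff_unique_mem.2 ⟨?_, ?_⟩⟩
      · simp [Finset.mem_filter, hj₀]
      · intro j hj
        exact hbij.injective (by rw [(Finset.mem_filter.1 hj).2, hj₀])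
    simp only [hbij, if_true]
    calc ∏ i : Fin k, ∑ b : Bool, sgn 𝕜 b ^ ((Finset.univ.filter (fun j => f j = i)).card + 1)
        = ∏ _i : Fin k, (2 : 𝕜) := by
          refine Finset.prod_congr rfl fun i _ => ?_
          rw [hd i]
          simp [sgn]
      _ = 2 ^ k := by simp [Finset.prod_const]
  · have hsurj : ¬ Function.Surjective f := by
      intro hs
      exact hbij (Finite.surjective_iff_bijective.1 hs)
    simp only [Function.Surjective, not_forall] at hsurj
    obtain ⟨i₀, hi₀⟩ := hsurj
    push_neg at hi₀
    have hd : (Finset.univ.filter (fun j => f j = i₀)).card = 0 := by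
      rw [Finset.card_eq_zero, Finset.filter_eq_empty_iff]
      intro j _
      exact hi₀ j
    simp only [hbij, if_false]
    refine Finset.prod_eq_zero (Finset.mem_univ i₀) ?_
    rw [hd]
    simp [sgn]

lemma polarization {k : ℕ} (B : ContinuousMultilinearMap 𝕜 (fun _ : Fin k => F) 𝕜)
    (y : Fin k → F) :
    ∑ ε : Fin k → Bool, (∏ i, sgn 𝕜 (ε i)) • B (fun _ => ∑ i, sgn 𝕜 (ε i) • y i)
      = (2 ^ k : 𝕜) • ∑ σ : Equiv.Perm (Fin k), B (fun j => y (σ j)) := by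
  have expand : ∀ ε : Fin k → Bool,
      B (fun _ : Fin k => ∑ i, sgn 𝕜 (ε i) • y i)
        = ∑ f : Fin k → Fin k, (∏ j, sgn 𝕜 (ε (f j))) • B (fun j => y (f j)) := by
    intro ε
    have h1 := B.toMultilinearMap.map_sum (α := fun _ : Fin k => Fin k)
      (g := fun _ i => sgn 𝕜 (ε i) • y i)
    refine h1.trans (Finset.sum_congr rfl fun r _ => ?_)
    exact B.toMultilinearMap.map_smul_univ (fun j => sgn 𝕜 (ε (r j))) (fun j => y (r j))
  calc ∑ ε : Fin k → Bool, (∏ i, sgn 𝕜 (ε i)) • B (fun _ => ∑ i, sgn 𝕜 (ε i) • y i)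
      = ∑ ε : Fin k → Bool, ∑ f : Fin k → Fin k,
          ((∏ i, sgn 𝕜 (ε i)) * ∏ j, sgn 𝕜 (ε (f j))) • B (fun j => y (f j)) := by
        refine Finset.sum_congr rfl fun ε _ => ?_
        rw [expand ε, Finset.smul_sum]
        exact Finset.sum_congr rfl fun f _ => smul_smul _ _ _
    _ = ∑ f : Fin k → Fin k,
          (∑ ε : Fin k → Bool, (∏ i, sgn 𝕜 (ε i)) * ∏ j, sgn 𝕜 (ε (f j)))
            • B (fun j => y (f j)) := by
        rw [Finset.sum_comm]
        exact Finset.sum_congr rfl fun f _ => (Finset.sum_smul).symm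
    _ = ∑ f : Fin k → Fin k,
          (if Function.Bijective f then (2 ^ k : 𝕜) else 0) • B (fun j => y (f j)) := by
        refine Finset.sum_congr rfl fun f _ => ?_
        rw [coeff_sum]
    _ = ∑ f ∈ Finset.univ.filter (fun f : Fin k → Fin k => Function.Bijective f),
          (2 ^ k : 𝕜) • B (fun j => y (f j)) := by
        rw [Finset.sum_filter]
        refine Finset.sum_congr rfl fun f _ => ?_
        rw [ite_smul, zero_smul]
    _ = (2 ^ k : 𝕜) • ∑ σ : Equiv.Perm (Fin k), B (fun j => y (σ j)) := by
        rw [Finset.smul_sum]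
        refine (Finset.sum_bij (fun (σ : Equiv.Perm (Fin k)) _ => (σ : Fin k → Fin k))
          ?_ ?_ ?_ ?_).symm
        · intro σ _
          simp only [Finset.mem_filter]
          exact ⟨Finset.mem_univ _, σ.bijective⟩
        · intro σ₁ _ σ₂ _ h
          exact Equiv.coe_fn_injective h
        · intro f hf
          refine ⟨Equiv.ofBijective f ?_, Finset.mem_univ _, rfl⟩
          simpa [Finset.mem_filter] using hf
        · intro σ _
          rfl

/-- Symmetrization of a continuous multilinear map. -/
noncomputable def symGen {k : ℕ} (B : ContinuousMultilinearMap 𝕜 (fun _ : Fin k => F) 𝕜) :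
    ContinuousMultilinearMap 𝕜 (fun _ : Fin k => F) 𝕜 :=
  ((k.factorial : 𝕜)⁻¹) • ∑ σ : Equiv.Perm (Fin k), ContinuousMultilinearMap.domDomCongr σ B

lemma symGen_apply {k : ℕ} (B : ContinuousMultilinearMap 𝕜 (fun _ : Fin k => F) 𝕜)
    (y : Fin k → F) :
    symGen B y = (k.factorial : 𝕜)⁻¹ • ∑ σ : Equiv.Perm (Fin k), B (fun j => y (σ j)) := by
  simp [symGen, ContinuousMultilinearMap.sum_apply]

lemma symGen_diag {k : ℕ} (B : ContinuousMultilinearMap 𝕜 (fun _ : Fin k => F) 𝕜) (y : F) :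
    symGen B (fun _ => y) = B (fun _ => y) := by
  rw [symGen_apply]
  have : ∑ σ : Equiv.Perm (Fin k), B (fun j => (fun _ => y) (σ j))
      = ∑ _σ : Equiv.Perm (Fin k), B (fun _ => y) := rfl
  rw [this, Finset.sum_const, Finset.card_univ, Fintype.card_perm, Fintype.card_fin,
    nsmul_eq_mul, smul_eq_mul, ← mul_assoc,
    inv_mul_cancel₀ (Nat.cast_ne_zero.2 (Nat.factorial_ne_zero k)), one_mul]

/-- The polarization formula for a `k`-homogeneous polynomial. -/
noncomputable def polarForm {k : ℕ} (q : HPoly 𝕜 k F 𝕜) (y : Fin k → F) : 𝕜 :=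
  ((2 ^ k : 𝕜) * (k.factorial : 𝕜))⁻¹ •
    ∑ ε : Fin k → Bool, (∏ i, sgn 𝕜 (ε i)) • q (∑ i, sgn 𝕜 (ε i) • y i)

lemma symGen_eq_polarForm {k : ℕ} (q : HPoly 𝕜 k F 𝕜)
    (B : ContinuousMultilinearMap 𝕜 (fun _ : Fin k => F) 𝕜)
    (hB : ∀ x, q x = B (fun _ => x)) (y : Fin k → F) :
    symGen B y = polarForm q y := by
  have h2 : (2 ^ k : 𝕜) ≠ 0 := pow_ne_zero _ two_ne_zero
  have hf : (k.factorial : 𝕜) ≠ 0 := Nat.cast_ne_zero.2 (Nat.factorial_ne_zero k)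
  rw [symGen_apply, polarForm]
  have hp := polarization B y
  simp only [← hB] at hp
  rw [hp, smul_smul]
  congr 1
  field_simp

/-- The symmetric continuous `k`-linear map canonically attached to a `k`-homogeneous
polynomial (via symmetrization of a chosen generator; by polarization it only depends
on the polynomial, linearly). -/
noncomputable def checkMap {k : ℕ} (q : HPoly 𝕜 k F 𝕜) :
    ContinuousMultilinearMap 𝕜 (fun _ : Fin k => F) 𝕜 :=
  symGen (Classical.choose q.isPoly)

lemma checkMap_eq_polarForm {k : ℕ} (q : HPoly 𝕜 k F 𝕜) (y : Fin k → F) :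
    checkMap q y = polarForm q y :=
  symGen_eq_polarForm q _ (Classical.choose_spec q.isPoly) y

lemma checkMap_diag {k : ℕ} (q : HPoly 𝕜 k F 𝕜) (y : F) :
    checkMap q (fun _ => y) = q y := by
  rw [checkMap, symGen_diag, ← Classical.choose_spec q.isPoly]

lemma checkMap_add {k : ℕ} (q q' : HPoly 𝕜 k F 𝕜) :
    checkMap (q + q') = checkMap q + checkMap q' := by
  ext y
  rw [ContinuousMultilinearMap.add_apply, checkMap_eq_polarForm, checkMap_eq_polarForm,
    checkMap_eq_polarForm]
  simp only [polarForm, HPoly.add_apply, smul_eq_mul, Finset.mul_sum]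
  rw [← Finset.sum_add_distrib]
  refine Finset.sum_congr rfl fun ε _ => by ring

lemma checkMap_smul {k : ℕ} (c : 𝕜) (q : HPoly 𝕜 k F 𝕜) :
    checkMap (c • q) = c • checkMap q := by
  ext y
  rw [ContinuousMultilinearMap.smul_apply, checkMap_eq_polarForm, checkMap_eq_polarForm]
  simp only [polarForm, HPoly.smul_apply, smul_eq_mul, Finset.mul_sum]
  refine Finset.sum_congr rfl fun ε _ => by ring

lemma checkMap_norm_le {k : ℕ} (hk : 1 ≤ k) (q : HPoly 𝕜 k F 𝕜) (y : Fin k → F) :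
    ‖checkMap q y‖ ≤ (k : ℝ) ^ k * ‖q‖ * ∏ i, ‖y i‖ := by
  by_cases hy : ∃ i, y i = 0
  · obtain ⟨i, hi⟩ := hy
    rw [(checkMap q).map_coord_zero i hi, norm_zero]
    have h0 : (∏ j, ‖y j‖) = 0 :=
      Finset.prod_eq_zero (Finset.mem_univ i) (by rw [hi, norm_zero])
    rw [h0, mul_zero]
  · push_neg at hy
    set c : Fin k → 𝕜 := fun i => ((‖y i‖ : ℝ) : 𝕜) with hc
    set u : Fin k → F := fun i => (c i)⁻¹ • y i with hu
    have hcy : ∀ i, c i • u i = y i := by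
      intro i
      rw [hu]
      dsimp only
      rw [smul_smul, mul_inv_cancel₀, one_smul]
      simpa [hc, RCLike.ofReal_eq_zero] using norm_ne_zero_iff.2 (hy i)
    have hnu : ∀ i, ‖u i‖ = 1 := by
      intro i
      rw [hu]
      dsimp only [hc]
      rw [norm_smul, norm_inv, RCLike.norm_ofReal, abs_of_nonneg (norm_nonneg _),
        inv_mul_cancel₀ (norm_ne_zero_iff.2 (hy i))]
    have key : checkMap q y = (∏ i, c i) • checkMap q u := by
      have h := (checkMap q).map_smul_univ c u
      rw [show (fun i => c i • u i) = y from funext hcy] at h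
      exact h
    have hub : ‖checkMap q u‖ ≤ (k : ℝ) ^ k * ‖q‖ := by
      rw [checkMap_eq_polarForm, polarForm]
      have hbound : ∀ ε : Fin k → Bool,
          ‖(∏ i, sgn 𝕜 (ε i)) • q (∑ i, sgn 𝕜 (ε i) • u i)‖ ≤ ‖q‖ * (k : ℝ) ^ k := by
        intro ε
        rw [norm_smul]
        have h1 : ‖∏ i, sgn 𝕜 (ε i)‖ = 1 := by
          rw [norm_prod]
          simp
        rw [h1, one_mul]
        have h2 : ‖∑ i, sgn 𝕜 (ε i) • u i‖ ≤ (k : ℝ) := by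
          refine (norm_sum_le _ _).trans ?_
          have heq : ∀ i : Fin k, ‖sgn 𝕜 (ε i) • u i‖ = 1 := fun i => by
            rw [norm_smul, norm_sgn, hnu, one_mul]
          rw [Finset.sum_congr rfl fun i _ => heq i, Finset.sum_const, Finset.card_univ,
            Fintype.card_fin, nsmul_eq_mul, mul_one]
        calc ‖q (∑ i, sgn 𝕜 (ε i) • u i)‖
            ≤ ‖q‖ * ‖∑ i, sgn 𝕜 (ε i) • u i‖ ^ k := HPoly.norm_apply_le hk q _
          _ ≤ ‖q‖ * (k : ℝ) ^ k :=
              mul_le_mul_of_nonneg_left (pow_le_pow_left₀ (norm_nonneg _) h2 k)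
                (HPoly.polyNorm_coe_nonneg q)
      have hcard : (Finset.univ : Finset (Fin k → Bool)).card = 2 ^ k := by
        simp [Finset.card_univ]
      have hA : ‖((2 ^ k : 𝕜) * (k.factorial : 𝕜))⁻¹‖
          = ((2 : ℝ) ^ k * (k.factorial : ℝ))⁻¹ := by
        rw [norm_inv, norm_mul, norm_pow, RCLike.norm_ofNat, RCLike.norm_natCast]
      rw [norm_smul, hA]
      have hsum : ‖∑ ε : Fin k → Bool, (∏ i, sgn 𝕜 (ε i)) • q (∑ i, sgn 𝕜 (ε i) • u i)‖
          ≤ (2 : ℝ) ^ k * (‖q‖ * (k : ℝ) ^ k) := by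
        refine (norm_sum_le _ _).trans ?_
        calc ∑ ε : Fin k → Bool, ‖(∏ i, sgn 𝕜 (ε i)) • q (∑ i, sgn 𝕜 (ε i) • u i)‖
            ≤ ∑ _ε : Fin k → Bool, ‖q‖ * (k : ℝ) ^ k :=
              Finset.sum_le_sum fun ε _ => hbound ε
          _ = (2 : ℝ) ^ k * (‖q‖ * (k : ℝ) ^ k) := by
              rw [Finset.sum_const, hcard, nsmul_eq_mul]
              push_cast
              ring
      have hq0 : (0 : ℝ) ≤ ‖q‖ := HPoly.polyNorm_coe_nonneg q
      have hfac : (1 : ℝ) ≤ (k.factorial : ℝ) := by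
        exact_mod_cast Nat.one_le_iff_ne_zero.2 (Nat.factorial_ne_zero k)
      calc ((2 : ℝ) ^ k * (k.factorial : ℝ))⁻¹
            * ‖∑ ε : Fin k → Bool, (∏ i, sgn 𝕜 (ε i)) • q (∑ i, sgn 𝕜 (ε i) • u i)‖
          ≤ ((2 : ℝ) ^ k * (k.factorial : ℝ))⁻¹ * ((2 : ℝ) ^ k * (‖q‖ * (k : ℝ) ^ k)) := by
            refine mul_le_mul_of_nonneg_left hsum (by positivity)
        _ = (k.factorial : ℝ)⁻¹ * (‖q‖ * (k : ℝ) ^ k) := by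
            field_simp
        _ ≤ 1 * (‖q‖ * (k : ℝ) ^ k) := by
            refine mul_le_mul_of_nonneg_right ?_ (by positivity)
            rw [inv_le_one_iff₀]
            right
            exact hfac
        _ = (k : ℝ) ^ k * ‖q‖ := by ring
    have hnc : ∀ i, ‖c i‖ = ‖y i‖ := fun i => by
      rw [hc]
      dsimp only
      rw [RCLike.norm_ofReal, abs_of_nonneg (norm_nonneg _)]
    calc ‖checkMap q y‖ = (∏ i, ‖y i‖) * ‖checkMap q u‖ := by
          rw [key, norm_smul, norm_prod]
          congr 1
          exact Finset.prod_congr rfl fun i _ => hnc i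
      _ ≤ (∏ i, ‖y i‖) * ((k : ℝ) ^ k * ‖q‖) :=
          mul_le_mul_of_nonneg_left hub (Finset.prod_nonneg fun i _ => norm_nonneg _)
      _ = (k : ℝ) ^ k * ‖q‖ * ∏ i, ‖y i‖ := by ring

/-- Composition of a continuous multilinear map with a family of continuous multilinear
maps, one in each slot. -/
noncomputable def compML {ι : Type*} [Fintype ι] [DecidableEq ι] {m : ℕ}
    (O : ContinuousMultilinearMap 𝕜 (fun _ : ι => G) H)
    (A : ι → ContinuousMultilinearMap 𝕜 (fun _ : Fin m => E) G) :
    ContinuousMultilinearMap 𝕜 (fun _ : ι × Fin m => E) H :=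
  MultilinearMap.mkContinuous
    { toFun := fun xs => O (fun i => A i (fun j => xs (i, j)))
      map_update_add' := by
        intro dec xs p a b
        obtain ⟨i₀, j₀⟩ := p
        have push : ∀ z : E,
            (fun i => A i (fun j => Function.update xs (i₀, j₀) z (i, j)))
              = Function.update (fun i => A i (fun j => xs (i, j))) i₀
                  (A i₀ (Function.update (fun j => xs (i₀, j)) j₀ z)) := by
          intro z
          funext i
          rcases eq_or_ne i i₀ with rfl | hi
          · rw [Function.update_self]
            congr 1
            funext j
            rcases eq_or_ne j j₀ with rfl | hj
            · rw [Function.update_self, Function.update_self]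
            · rw [Function.update_of_ne hj, Function.update_of_ne (by simp [hj])]
          · rw [Function.update_of_ne hi]
            congr 1
            funext j
            rw [Function.update_of_ne (by simp [hi])]
        rw [push, push, push, ContinuousMultilinearMap.map_update_add,
          ContinuousMultilinearMap.map_update_add]
      map_update_smul' := by
        intro dec xs p c a
        obtain ⟨i₀, j₀⟩ := p
        have push : ∀ z : E,
            (fun i => A i (fun j => Function.update xs (i₀, j₀) z (i, j)))
              = Function.update (fun i => A i (fun j => xs (i, j))) i₀
                  (A i₀ (Function.update (fun j => xs (i₀, j)) j₀ z)) := by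
          intro z
          funext i
          rcases eq_or_ne i i₀ with rfl | hi
          · rw [Function.update_self]
            congr 1
            funext j
            rcases eq_or_ne j j₀ with rfl | hj
            · rw [Function.update_self, Function.update_self]
            · rw [Function.update_of_ne hj, Function.update_of_ne (by simp [hj])]
          · rw [Function.update_of_ne hi]
            congr 1
            funext j
            rw [Function.update_of_ne (by simp [hi])]
        rw [push, push, ContinuousMultilinearMap.map_update_smul,
          ContinuousMultilinearMap.map_update_smul] }
    (‖O‖ * ∏ i, ‖A i‖)
    (fun xs => by
      calc ‖O (fun i => A i (fun j => xs (i, j)))‖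
          ≤ ‖O‖ * ∏ i, ‖A i (fun j => xs (i, j))‖ := O.le_opNorm _
        _ ≤ ‖O‖ * ∏ i, (‖A i‖ * ∏ j, ‖xs (i, j)‖) := by
            refine mul_le_mul_of_nonneg_left ?_ (norm_nonneg O)
            exact Finset.prod_le_prod (fun i _ => norm_nonneg _) (fun i _ => (A i).le_opNorm _)
        _ = (‖O‖ * ∏ i, ‖A i‖) * ∏ p : ι × Fin m, ‖xs p‖ := by
            rw [Finset.prod_mul_distrib, Fintype.prod_prod_type (f := fun p : ι × Fin m => ‖xs p‖)]
            ring)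

lemma compML_apply {ι : Type*} [Fintype ι] [DecidableEq ι] {m : ℕ}
    (O : ContinuousMultilinearMap 𝕜 (fun _ : ι => G) H)
    (A : ι → ContinuousMultilinearMap 𝕜 (fun _ : Fin m => E) G) (xs : ι × Fin m → E) :
    compML O A xs = O (fun i => A i (fun j => xs (i, j))) := rfl

/-- Evaluation at a point, as a continuous linear map on `HPoly`. -/
noncomputable def evalCLM {m : ℕ} (hm : 1 ≤ m) (x : E) : HPoly 𝕜 m E F →L[𝕜] F :=
  LinearMap.mkContinuous
    { toFun := fun P => P x
      map_add' := fun P Q => rfl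
      map_smul' := fun c P => rfl }
    (‖x‖ ^ m)
    (fun P => by
      rw [mul_comm]
      exact HPoly.norm_apply_le hm P x)

/-- `q ↦ q̌(w)`, as a continuous linear map on `HPoly`. -/
noncomputable def checkCLM {k : ℕ} (hk : 1 ≤ k) (w : Fin k → F) :
    HPoly 𝕜 k F 𝕜 →L[𝕜] 𝕜 :=
  LinearMap.mkContinuous
    { toFun := fun q => checkMap q w
      map_add' := fun q q' => by
        rw [checkMap_add, ContinuousMultilinearMap.add_apply]
      map_smul' := fun c q => by
        rw [checkMap_smul, ContinuousMultilinearMap.smul_apply, RingHom.id_apply] }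
    ((k : ℝ) ^ k * ∏ i, ‖w i‖)
    (fun q => by
      calc ‖checkMap q w‖ ≤ (k : ℝ) ^ k * ‖q‖ * ∏ i, ‖w i‖ := checkMap_norm_le hk q w
        _ = ((k : ℝ) ^ k * ∏ i, ‖w i‖) * ‖q‖ := by ring)

/-- Reindexing equivalence for the inner generator. -/
def eIdx (m n k : ℕ) : ((Fin n × Fin k) × Fin m) ≃ Fin (m * n * k) :=
  ((finProdFinEquiv.prodCongr (Equiv.refl (Fin m))).trans finProdFinEquiv).trans
    (finCongr (by ring))

/-- The generator of the inner polynomial `x ↦ ∏ⱼ q̌ⱼ(P_{j1}(x),…,P_{jk}(x))`. -/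
noncomputable def innerGen {m n k : ℕ} (Ps : Fin n → Fin k → HPoly 𝕜 m E F)
    (qs : Fin n → HPoly 𝕜 k F 𝕜) :
    ContinuousMultilinearMap 𝕜 (fun _ : Fin (m * n * k) => E) 𝕜 :=
  ContinuousMultilinearMap.domDomCongr (eIdx m n k)
    (compML
      (compML (ContinuousMultilinearMap.mkPiAlgebra 𝕜 (Fin n) 𝕜) (fun j => checkMap (qs j)))
      (fun p => Classical.choose (Ps p.1 p.2).isPoly))

/-- The inner polynomial `x ↦ ∏ⱼ q̌ⱼ(P_{j1}(x),…,P_{jk}(x))` as an element of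
`𝒫(^{mnk}E)`. -/
noncomputable def innerHPoly {m n k : ℕ} (Ps : Fin n → Fin k → HPoly 𝕜 m E F)
    (qs : Fin n → HPoly 𝕜 k F 𝕜) : HPoly 𝕜 (m * n * k) E 𝕜 :=
  ⟨fun x => ∏ j, checkMap (qs j) (fun i => Ps j i x),
   ⟨innerGen Ps qs, fun x => by
      simp only [innerGen, ContinuousMultilinearMap.domDomCongr_apply, compML_apply,
        ContinuousMultilinearMap.mkPiAlgebra_apply]
      refine Finset.prod_congr rfl fun j _ => ?_
      congr 1
      funext i
      exact Classical.choose_spec (Ps j i).isPoly x⟩⟩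

lemma innerHPoly_apply {m n k : ℕ} (Ps : Fin n → Fin k → HPoly 𝕜 m E F)
    (qs : Fin n → HPoly 𝕜 k F 𝕜) (x : E) :
    innerHPoly Ps qs x = ∏ j, checkMap (qs j) (fun i => Ps j i x) := rfl

lemma innerHPoly_norm_le {m n k : ℕ} (hk : 1 ≤ k) (Ps : Fin n → Fin k → HPoly 𝕜 m E F)
    (qs : Fin n → HPoly 𝕜 k F 𝕜) :
    ‖innerHPoly Ps qs‖
      ≤ ((k : ℝ) ^ k) ^ n * (∏ j, ∏ i, ‖Ps j i‖) * ∏ j, ‖qs j‖ := by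
  have h0 : (0 : ℝ) ≤ ((k : ℝ) ^ k) ^ n * (∏ j, ∏ i, ‖Ps j i‖) * ∏ j, ‖qs j‖ :=
    mul_nonneg (mul_nonneg (by positivity)
      (Finset.prod_nonneg fun j _ => Finset.prod_nonneg fun i _ => norm_nonneg _))
      (Finset.prod_nonneg fun j _ => norm_nonneg _)
  refine HPoly.polyNorm_le _ h0 fun x hx => ?_
  rw [innerHPoly_apply, norm_prod]
  calc ∏ j, ‖checkMap (qs j) (fun i => Ps j i x)‖
      ≤ ∏ j, ((k : ℝ) ^ k * ‖qs j‖ * ∏ i, ‖Ps j i‖) := by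
        refine Finset.prod_le_prod (fun j _ => norm_nonneg _) fun j _ => ?_
        calc ‖checkMap (qs j) (fun i => Ps j i x)‖
            ≤ (k : ℝ) ^ k * ‖qs j‖ * ∏ i, ‖Ps j i x‖ := checkMap_norm_le hk _ _
          _ ≤ (k : ℝ) ^ k * ‖qs j‖ * ∏ i, ‖Ps j i‖ := by
              refine mul_le_mul_of_nonneg_left ?_
                (mul_nonneg (by positivity) (norm_nonneg _))
              exact Finset.prod_le_prod (fun i _ => norm_nonneg _)
                (fun i _ => HPoly.le_polyNorm _ hx)
    _ = ((k : ℝ) ^ k) ^ n * (∏ j, ∏ i, ‖Ps j i‖) * ∏ j, ‖qs j‖ := by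
        rw [Finset.prod_mul_distrib, Finset.prod_mul_distrib, Finset.prod_const,
          Finset.card_univ, Fintype.card_fin]
        ring

/-- The `n`-linear map `(q₁,…,qₙ) ↦ (x ↦ ∏ⱼ q̌ⱼ(Pⱼ₁(x),…))`. -/
noncomputable def middleML {m n k : ℕ} (hk : 1 ≤ k) (Ps : Fin n → Fin k → HPoly 𝕜 m E F) :
    ContinuousMultilinearMap 𝕜 (fun _ : Fin n => HPoly 𝕜 k F 𝕜) (HPoly 𝕜 (m * n * k) E 𝕜) :=
  MultilinearMap.mkContinuous
    { toFun := fun qs => innerHPoly Ps qs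
      map_update_add' := by
        intro dec qs j₀ a b
        refine HPoly.ext fun x => ?_
        have hb : ∀ qs' : Fin n → HPoly 𝕜 k F 𝕜,
            innerHPoly Ps qs' x
              = ((ContinuousMultilinearMap.mkPiAlgebra 𝕜 (Fin n) 𝕜).compContinuousLinearMap
                  (fun j => checkCLM hk (fun i => Ps j i x))) qs' := fun _ => rfl
        rw [HPoly.add_apply, hb, hb, hb]
        exact ContinuousMultilinearMap.map_update_add _ qs j₀ a b
      map_update_smul' := by
        intro dec qs j₀ c a
        refine HPoly.ext fun x => ?_
        have hb : ∀ qs' : Fin n → HPoly 𝕜 k F 𝕜,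
            innerHPoly Ps qs' x
              = ((ContinuousMultilinearMap.mkPiAlgebra 𝕜 (Fin n) 𝕜).compContinuousLinearMap
                  (fun j => checkCLM hk (fun i => Ps j i x))) qs' := fun _ => rfl
        rw [HPoly.smul_apply, hb, hb]
        exact ContinuousMultilinearMap.map_update_smul _ qs j₀ c a }
    (((k : ℝ) ^ k) ^ n * ∏ j, ∏ i, ‖Ps j i‖)
    (fun qs => innerHPoly_norm_le hk Ps qs)

/-- `Δₖⁿ P` (generalized to a tuple of `P`s). -/
noncomputable def DPoly {m n k : ℕ} (hk : 1 ≤ k) (Ps : Fin n → Fin k → HPoly 𝕜 m E F) :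
    HPoly 𝕜 n (HPoly 𝕜 k F 𝕜) (HPoly 𝕜 (m * n * k) E 𝕜) :=
  ⟨fun q => middleML hk Ps (fun _ => q), ⟨middleML hk Ps, fun _ => rfl⟩⟩

/-- Reindexing equivalence for the outer generator. -/
def ekn (n k : ℕ) : (Fin n × Fin k) ≃ Fin (k * n) :=
  (Equiv.prodComm (Fin n) (Fin k)).trans finProdFinEquiv

/-- The generating continuous `kn`-linear map of `Δₖⁿ`. -/
noncomputable def bigCMM {m n k : ℕ} (hm : 1 ≤ m) (hk : 1 ≤ k) :
    ContinuousMultilinearMap 𝕜 (fun _ : Fin (k * n) => HPoly 𝕜 m E F)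
      (HPoly 𝕜 n (HPoly 𝕜 k F 𝕜) (HPoly 𝕜 (m * n * k) E 𝕜)) :=
  MultilinearMap.mkContinuous
    { toFun := fun Ps => DPoly hk (fun j i => Ps (ekn n k (j, i)))
      map_update_add' := by
        intro dec Ps l₀ a b
        refine HPoly.ext fun q => HPoly.ext fun x => ?_
        have hb : ∀ Ps' : Fin (k * n) → HPoly 𝕜 m E F,
            DPoly hk (fun j i => Ps' (ekn n k (j, i))) q x
              = (ContinuousMultilinearMap.domDomCongr (ekn n k)
                  ((compML (ContinuousMultilinearMap.mkPiAlgebra 𝕜 (Fin n) 𝕜)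
                    (fun _ => checkMap q)).compContinuousLinearMap
                      (fun _ => evalCLM hm x))) Ps' := fun _ => rfl
        rw [HPoly.add_apply, HPoly.add_apply, hb, hb, hb]
        exact ContinuousMultilinearMap.map_update_add _ Ps l₀ a b
      map_update_smul' := by
        intro dec Ps l₀ c a
        refine HPoly.ext fun q => HPoly.ext fun x => ?_
        have hb : ∀ Ps' : Fin (k * n) → HPoly 𝕜 m E F,
            DPoly hk (fun j i => Ps' (ekn n k (j, i))) q x
              = (ContinuousMultilinearMap.domDomCongr (ekn n k)
                  ((compML (ContinuousMultilinearMap.mkPiAlgebra 𝕜 (Fin n) 𝕜)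
                    (fun _ => checkMap q)).compContinuousLinearMap
                      (fun _ => evalCLM hm x))) Ps' := fun _ => rfl
        rw [HPoly.smul_apply, HPoly.smul_apply, hb, hb]
        exact ContinuousMultilinearMap.map_update_smul _ Ps l₀ c a }
    (((k : ℝ) ^ k) ^ n)
    (fun Ps => by
      have h0 : (0 : ℝ) ≤ ((k : ℝ) ^ k) ^ n * ∏ l, ‖Ps l‖ :=
        mul_nonneg (by positivity) (Finset.prod_nonneg fun l _ => norm_nonneg _)
      refine HPoly.polyNorm_le _ h0 fun q hq => ?_
      have hre : (∏ j, ∏ i, ‖Ps (ekn n k (j, i))‖) = ∏ l, ‖Ps l‖ := by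
        rw [← Fintype.prod_prod_type (f := fun p : Fin n × Fin k => ‖Ps (ekn n k p)‖)]
        exact Equiv.prod_comp (ekn n k) (fun l => ‖Ps l‖)
      calc ‖innerHPoly (fun j i => Ps (ekn n k (j, i))) (fun _ => q)‖
          ≤ ((k : ℝ) ^ k) ^ n * (∏ j, ∏ i, ‖Ps (ekn n k (j, i))‖) * ∏ _j : Fin n, ‖q‖ :=
            innerHPoly_norm_le hk _ _
        _ ≤ ((k : ℝ) ^ k) ^ n * (∏ j, ∏ i, ‖Ps (ekn n k (j, i))‖) * 1 := by
            refine mul_le_mul_of_nonneg_left ?_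
              (mul_nonneg (by positivity)
                (Finset.prod_nonneg fun j _ => Finset.prod_nonneg fun i _ => norm_nonneg _))
            rw [Finset.prod_const, Finset.card_univ, Fintype.card_fin]
            exact pow_le_one₀ (norm_nonneg _) hq
        _ = ((k : ℝ) ^ k) ^ n * ∏ l, ‖Ps l‖ := by rw [hre, mul_one])

end Statement2

end Statement2Aux

/-- The correspondence `Δₖⁿ : 𝒫(^mE;F) → 𝒫(ⁿ𝒫(^kF);𝒫(^{mnk}E))`,
`P ↦ Δₖⁿ P`, is a continuous `kn`-homogeneous polynomial, and if `E ≠ {0}` and `F ≠ {0}`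
then `‖Δₖⁿ‖ = 1`. -/
theorem statement2 (𝕜 : Type*) [RCLike 𝕜] (E F : Type*)
    [NormedAddCommGroup E] [NormedSpace 𝕜 E] [CompleteSpace E]
    [NormedAddCommGroup F] [NormedSpace 𝕜 F] [CompleteSpace F]
    (m n k : ℕ) (hm : 1 ≤ m) (hn : 1 ≤ n) (hk : 1 ≤ k) :
    ∃ D : HPoly 𝕜 m E F → HPoly 𝕜 n (HPoly 𝕜 k F 𝕜) (HPoly 𝕜 (m * n * k) E 𝕜),
      (∀ (P : HPoly 𝕜 m E F) (q : HPoly 𝕜 k F 𝕜) (x : E), D P q x = q (P x) ^ n) ∧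
      IsHomPoly 𝕜 (k * n) D ∧
      (Nontrivial E → Nontrivial F → polyNorm D = 1) := by
    classical
  open Statement2 in
  refine ⟨fun P => DPoly hk (fun _ _ => P), ?_, ?_, ?_⟩
  · intro P q x
    show ∏ _j : Fin n, checkMap q (fun _ : Fin k => P x) = q (P x) ^ n
    rw [Finset.prod_const, Finset.card_univ, Fintype.card_fin, checkMap_diag]
  · exact ⟨bigCMM hm hk, fun P => rfl⟩
  · intro hE hF
    have hprop : ∀ (P : HPoly 𝕜 m E F) (q : HPoly 𝕜 k F 𝕜) (x : E),
        (DPoly hk (fun _ _ => P) : HPoly 𝕜 n (HPoly 𝕜 k F 𝕜) (HPoly 𝕜 (m * n * k) E 𝕜)) q x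
          = q (P x) ^ n := by
      intro P q x
      show ∏ _j : Fin n, checkMap q (fun _ : Fin k => P x) = q (P x) ^ n
      rw [Finset.prod_const, Finset.card_univ, Fintype.card_fin, checkMap_diag]
    have hub : ∀ P : HPoly 𝕜 m E F, ‖P‖ ≤ 1 →
        ‖(DPoly hk (fun _ _ => P) : HPoly 𝕜 n (HPoly 𝕜 k F 𝕜) (HPoly 𝕜 (m * n * k) E 𝕜))‖ ≤ 1 := by
      intro P hP
      refine HPoly.polyNorm_le _ zero_le_one fun q hq => ?_
      refine HPoly.polyNorm_le _ zero_le_one fun x hx => ?_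
      rw [hprop P q x, norm_pow]
      have h1 : ‖P x‖ ≤ 1 := by
        calc ‖P x‖ ≤ ‖P‖ * ‖x‖ ^ m := HPoly.norm_apply_le hm P x
          _ ≤ 1 * 1 :=
            mul_le_mul hP (pow_le_one₀ (norm_nonneg _) hx) (by positivity) zero_le_one
          _ = 1 := mul_one 1
      have h2 : ‖q (P x)‖ ≤ 1 := by
        calc ‖q (P x)‖ ≤ ‖q‖ * ‖P x‖ ^ k := HPoly.norm_apply_le hk q (P x)
          _ ≤ 1 * 1 :=
            mul_le_mul hq (pow_le_one₀ (norm_nonneg _) h1) (by positivity) zero_le_one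
          _ = 1 := mul_one 1
      exact pow_le_one₀ (norm_nonneg _) h2
    refine le_antisymm ?_ ?_
    · refine Real.sSup_le ?_ zero_le_one
      rintro r ⟨P, hP, rfl⟩
      exact hub P hP
    · -- now construct the norming elements
      obtain ⟨x₁, hx₁⟩ := exists_ne (0 : E)
      obtain ⟨y₁, hy₁⟩ := exists_ne (0 : F)
      obtain ⟨f, hf1, hfx⟩ := exists_dual_vector 𝕜 x₁ (norm_ne_zero_iff.2 hx₁)
      set y₀ : F := ((‖y₁‖ : ℝ) : 𝕜)⁻¹ • y₁ with hy₀
      have hy₀n : ‖y₀‖ = 1 := by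
        rw [hy₀, norm_smul, norm_inv, RCLike.norm_ofReal, abs_of_nonneg (norm_nonneg _),
          inv_mul_cancel₀ (norm_ne_zero_iff.2 hy₁)]
      have hy₀0 : y₀ ≠ 0 := by
        intro h
        rw [h, norm_zero] at hy₀n
        exact one_ne_zero hy₀n.symm
      obtain ⟨g, hg1, hgy⟩ := exists_dual_vector 𝕜 y₀ (norm_ne_zero_iff.2 hy₀0)
      have hgy1 : g y₀ = 1 := by rw [hgy, hy₀n, RCLike.ofReal_one]
      set P₀ : HPoly 𝕜 m E F := ⟨fun x => f x ^ m • y₀,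
        ⟨(ContinuousMultilinearMap.mkPiRing 𝕜 (Fin m) y₀).compContinuousLinearMap
            (fun _ => f),
         fun x => by
          simp [ContinuousMultilinearMap.compContinuousLinearMap_apply,
            ContinuousMultilinearMap.mkPiRing_apply, Finset.prod_const]⟩⟩ with hP₀def
      set q₀ : HPoly 𝕜 k F 𝕜 := ⟨fun y => g y ^ k,
        ⟨(ContinuousMultilinearMap.mkPiAlgebra 𝕜 (Fin k) 𝕜).compContinuousLinearMap
            (fun _ => g),
         fun y => by
          simp [ContinuousMultilinearMap.compContinuousLinearMap_apply,
            ContinuousMultilinearMap.mkPiAlgebra_apply, Finset.prod_const]⟩⟩ with hq₀def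
      have hP₀ : ‖P₀‖ ≤ 1 := by
        refine HPoly.polyNorm_le _ zero_le_one fun x hx => ?_
        show ‖f x ^ m • y₀‖ ≤ 1
        rw [norm_smul, norm_pow, hy₀n, mul_one]
        refine pow_le_one₀ (norm_nonneg _) ?_
        calc ‖f x‖ ≤ ‖f‖ * ‖x‖ := f.le_opNorm x
          _ ≤ 1 := by rw [hf1, one_mul]; exact hx
      have hq₀ : ‖q₀‖ ≤ 1 := by
        refine HPoly.polyNorm_le _ zero_le_one fun y hy => ?_
        show ‖g y ^ k‖ ≤ 1
        rw [norm_pow]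
        refine pow_le_one₀ (norm_nonneg _) ?_
        calc ‖g y‖ ≤ ‖g‖ * ‖y‖ := g.le_opNorm y
          _ ≤ 1 := by rw [hg1, one_mul]; exact hy
      have hDP : ∀ x : E, (DPoly hk (fun _ _ => P₀) : HPoly 𝕜 n (HPoly 𝕜 k F 𝕜)
          (HPoly 𝕜 (m * n * k) E 𝕜)) q₀ x = f x ^ (m * k * n) := by
        intro x
        rw [hprop P₀ q₀ x]
        show ((g ((f x ^ m : 𝕜) • y₀)) ^ k) ^ n = f x ^ (m * k * n)
        rw [map_smul, hgy1, smul_eq_mul, mul_one, ← pow_mul, ← pow_mul]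
        congr 1
        ring
      have hNpos : m * k * n ≠ 0 := by positivity
      have hkey : 1 ≤ ‖(DPoly hk (fun _ _ => P₀) : HPoly 𝕜 n (HPoly 𝕜 k F 𝕜)
          (HPoly 𝕜 (m * n * k) E 𝕜)) q₀‖ := by
        by_contra hlt
        push_neg at hlt
        set s := ‖(DPoly hk (fun _ _ => P₀) : HPoly 𝕜 n (HPoly 𝕜 k F 𝕜)
          (HPoly 𝕜 (m * n * k) E 𝕜)) q₀‖ with hs
        have hs0 : 0 ≤ s := norm_nonneg _
        set c := s ^ ((m * k * n : ℝ)⁻¹) with hcdef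
        have hc0 : 0 ≤ c := Real.rpow_nonneg hs0 _
        have hNR : (0 : ℝ) < (m * k * n : ℕ) := by
          exact_mod_cast Nat.pos_of_ne_zero hNpos
        have hcN : c ^ (m * k * n) = s := by
          rw [hcdef, ← Real.rpow_natCast (s ^ ((m * k * n : ℝ)⁻¹)) (m * k * n),
            ← Real.rpow_mul hs0]
          push_cast
          rw [inv_mul_cancel₀ (by exact_mod_cast hNR.ne'), Real.rpow_one]
        have hc1 : c < 1 := Real.rpow_lt_one hs0 hlt (by positivity)
        have hfb : ∀ x : E, ‖x‖ ≤ 1 → ‖f x‖ ≤ c := by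
          intro x hx
          have h1 : ‖(DPoly hk (fun _ _ => P₀) : HPoly 𝕜 n (HPoly 𝕜 k F 𝕜)
              (HPoly 𝕜 (m * n * k) E 𝕜)) q₀ x‖ ≤ s := HPoly.le_polyNorm _ hx
          rw [hDP x, norm_pow] at h1
          exact le_of_pow_le_pow_left₀ hNpos hc0 (by rw [hcN]; exact h1)
        have hfle : ‖f‖ ≤ c := by
          refine f.opNorm_le_bound hc0 fun x => ?_
          rcases eq_or_ne x 0 with rfl | hx0
          · simp
          · have hnx : ‖x‖ ≠ 0 := norm_ne_zero_iff.2 hx0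
            have hu : ‖(((‖x‖ : ℝ) : 𝕜))⁻¹ • x‖ ≤ 1 := by
              rw [norm_smul, norm_inv, RCLike.norm_ofReal, abs_of_nonneg (norm_nonneg x),
                inv_mul_cancel₀ hnx]
            have hfu := hfb _ hu
            rw [map_smul, norm_smul, norm_inv, RCLike.norm_ofReal,
              abs_of_nonneg (norm_nonneg x)] at hfu
            calc ‖f x‖ = ‖x‖ * (‖x‖⁻¹ * ‖f x‖) := by
                  field_simp
              _ ≤ ‖x‖ * c := mul_le_mul_of_nonneg_left hfu (norm_nonneg x)
              _ = c * ‖x‖ := mul_comm _ _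
        rw [hf1] at hfle
        linarith
      have hbdd : BddAbove ((fun P : HPoly 𝕜 m E F =>
          ‖(fun P => DPoly hk (fun (_ : Fin n) (_ : Fin k) => P)) P‖) '' {P | ‖P‖ ≤ 1}) := by
        refine ⟨1, ?_⟩
        rintro r ⟨P, hP, rfl⟩
        exact hub P hP
      calc (1 : ℝ)
          ≤ ‖(DPoly hk (fun _ _ => P₀) : HPoly 𝕜 n (HPoly 𝕜 k F 𝕜)
              (HPoly 𝕜 (m * n * k) E 𝕜)) q₀‖ := hkey
        _ ≤ ‖DPoly hk (fun (_ : Fin n) (_ : Fin k) => P₀)‖ := HPoly.le_polyNorm _ hq₀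
        _ ≤ polyNorm (fun P : HPoly 𝕜 m E F => DPoly hk (fun _ _ => P)) :=
            le_csSup hbdd ⟨P₀, hP₀, rfl⟩
end

section
/- Let E and F be Banach spaces over 𝕜 (= ℝ or ℂ), m, n, k ≥ 1, and let P ∈ 𝒫(^mE;F) have finite rank, i.e. the linear span of the range of P is finite dimensional. Then Δ_k^n P is a polynomial of finite type: there are finitely many continuous linear functionals ψ_{i,1}, …, ψ_{i,n} on the Banach space 𝒫(^kF) and polynomials R_i ∈ 𝒫(^{mnk}E), i = 1, …, N, such that (Δ_k^n P)(q) = Σ_{i=1}^N ψ_{i,1}(q) ⋯ ψ_{i,n}(q) · R_i for every q ∈ 𝒫(^kF). -/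
open scoped NNReal ENNReal

section aux
variable {𝕜 : Type*} [RCLike 𝕜] {E : Type*} [NormedAddCommGroup E] [NormedSpace 𝕜 E]

theorem IsHomPoly.cast {a b : ℕ} (h : a = b) {F : Type*} [NormedAddCommGroup F]
    [NormedSpace 𝕜 F] {f : E → F} (hf : IsHomPoly 𝕜 a f) : IsHomPoly 𝕜 b f := h ▸ hf

theorem IsHomPoly.mul {a b : ℕ} {f g : E → 𝕜} (hf : IsHomPoly 𝕜 a f) (hg : IsHomPoly 𝕜 b g) :
    IsHomPoly 𝕜 (a + b) (fun x => f x * g x) := by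
  obtain ⟨A, hA⟩ := hf; obtain ⟨B, hB⟩ := hg
  classical
  let Craw : MultilinearMap 𝕜 (fun _ : Fin a ⊕ Fin b => E) 𝕜 :=
    { toFun := fun v => A (v ∘ Sum.inl) * B (v ∘ Sum.inr)
      map_update_add' := by
        intro dec v i x y
        rcases i with i | i
        · rw [Function.update_comp_eq_of_injective v Sum.inl_injective,
            Function.update_comp_eq_of_injective v Sum.inl_injective,
            Function.update_comp_eq_of_injective v Sum.inl_injective,
            Function.update_comp_eq_of_forall_ne, Function.update_comp_eq_of_forall_ne,
            Function.update_comp_eq_of_forall_ne, A.map_update_add, add_mul] <;>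
            exact fun j => by simp
        · rw [Function.update_comp_eq_of_injective v Sum.inr_injective,
            Function.update_comp_eq_of_injective v Sum.inr_injective,
            Function.update_comp_eq_of_injective v Sum.inr_injective,
            Function.update_comp_eq_of_forall_ne, Function.update_comp_eq_of_forall_ne,
            Function.update_comp_eq_of_forall_ne, B.map_update_add, mul_add] <;>
            exact fun j => by simp
      map_update_smul' := by
        intro dec v i c x
        rcases i with i | i
        · rw [Function.update_comp_eq_of_injective v Sum.inl_injective,
            Function.update_comp_eq_of_injective v Sum.inl_injective,
            Function.update_comp_eq_of_forall_ne, Function.update_comp_eq_of_forall_ne,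
            A.map_update_smul, smul_mul_assoc] <;> exact fun j => by simp
        · rw [Function.update_comp_eq_of_injective v Sum.inr_injective,
            Function.update_comp_eq_of_injective v Sum.inr_injective,
            Function.update_comp_eq_of_forall_ne, Function.update_comp_eq_of_forall_ne,
            B.map_update_smul, mul_smul_comm] <;> exact fun j => by simp }
  have hbound : ∀ v : Fin a ⊕ Fin b → E, ‖Craw v‖ ≤ (‖A‖ * ‖B‖) * ∏ i, ‖v i‖ := by
    intro v
    have h1 : ‖Craw v‖ = ‖A (v ∘ Sum.inl)‖ * ‖B (v ∘ Sum.inr)‖ := norm_mul _ _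
    rw [h1, Fintype.prod_sum_type]
    calc ‖A (v ∘ Sum.inl)‖ * ‖B (v ∘ Sum.inr)‖
        ≤ (‖A‖ * ∏ i : Fin a, ‖v (Sum.inl i)‖) * (‖B‖ * ∏ i : Fin b, ‖v (Sum.inr i)‖) := by
          apply mul_le_mul (A.le_opNorm _) (B.le_opNorm _) (norm_nonneg _)
          positivity
      _ = ‖A‖ * ‖B‖ * ((∏ i : Fin a, ‖v (Sum.inl i)‖) * ∏ i : Fin b, ‖v (Sum.inr i)‖) := by ring
  let C : ContinuousMultilinearMap 𝕜 (fun _ : Fin a ⊕ Fin b => E) 𝕜 :=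
    Craw.mkContinuous (‖A‖ * ‖B‖) hbound
  refine ⟨C.domDomCongr finSumFinEquiv, fun x => ?_⟩
  show f x * g x = _
  rw [hA x, hB x, ContinuousMultilinearMap.domDomCongr_apply]
  show _ = Craw fun _ => x
  rfl

theorem IsHomPoly.add' {a : ℕ} {f g : E → 𝕜} (hf : IsHomPoly 𝕜 a f) (hg : IsHomPoly 𝕜 a g) :
    IsHomPoly 𝕜 a (fun x => f x + g x) := by
  obtain ⟨A, hA⟩ := hf; obtain ⟨B, hB⟩ := hg
  exact ⟨A + B, fun x => by simp [hA x, hB x]⟩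

theorem IsHomPoly.smulc {a : ℕ} (c : 𝕜) {f : E → 𝕜} (hf : IsHomPoly 𝕜 a f) :
    IsHomPoly 𝕜 a (fun x => c * f x) := by
  obtain ⟨A, hA⟩ := hf
  exact ⟨c • A, fun x => by simp [hA x]⟩

theorem isHomPoly_sum {a : ℕ} {ι : Type*} (s : Finset ι) (f : ι → E → 𝕜)
    (hf : ∀ i ∈ s, IsHomPoly 𝕜 a (f i)) :
    IsHomPoly 𝕜 a (fun x => ∑ i ∈ s, f i x) := by
  classical
  induction s using Finset.induction with
  | empty => exact ⟨0, by simp⟩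
  | insert _ _ h ih =>
      simp only [Finset.sum_insert h]
      exact (hf _ (Finset.mem_insert_self _ _)).add'
        (ih fun i hi => hf i (Finset.mem_insert_of_mem hi))

theorem isHomPoly_prod (e : ℕ) : ∀ (s : ℕ) (f : Fin s → E → 𝕜),
    (∀ i, IsHomPoly 𝕜 e (f i)) → IsHomPoly 𝕜 (s * e) (fun x => ∏ i, f i x) := by
  intro s
  induction s with
  | zero =>
      intro f _
      refine IsHomPoly.cast (by ring) ⟨ContinuousMultilinearMap.constOfIsEmpty 𝕜 (fun _ : Fin 0 => E) 1,
        fun x => ?_⟩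
      simp
  | succ s ih =>
      intro f hf
      have h1 : IsHomPoly 𝕜 (e + s * e) (fun x => f 0 x * ∏ i : Fin s, f i.succ x) :=
        (hf 0).mul (ih (fun i => f i.succ) fun i => hf _)
      refine IsHomPoly.cast (by ring) (IsHomPoly.cast rfl ?_ : IsHomPoly 𝕜 (e + s * e) _)
      convert h1 using 1
      funext x
      rw [Fin.prod_univ_succ]
end aux

section ev
variable {𝕜 : Type*} [RCLike 𝕜] {k : ℕ} {F : Type*} [NormedAddCommGroup F] [NormedSpace 𝕜 F]

theorem HPoly.apply_zero (hk : 1 ≤ k) (q : HPoly 𝕜 k F 𝕜) : q 0 = 0 := by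
  obtain ⟨A, hA⟩ := q.isPoly
  rw [hA]
  exact A.map_coord_zero (⟨0, hk⟩ : Fin k) rfl

theorem HPoly.norm_apply_le_s17 (hk : 1 ≤ k) (q : HPoly 𝕜 k F 𝕜) (y : F) :
    ‖q y‖ ≤ ‖y‖ ^ k * ‖q‖ := by
  rcases eq_or_ne y 0 with rfl | hy
  · rw [HPoly.apply_zero hk q, norm_zero, norm_zero, zero_pow (by omega), zero_mul]
  · set c : 𝕜 := ((‖y‖ : ℝ) : 𝕜) with hcdef
    have hcn : ‖c‖ = ‖y‖ := by
      rw [hcdef, RCLike.norm_ofReal, abs_of_nonneg (norm_nonneg y)]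
    have hc : c ≠ 0 := by
      simp only [hcdef, ne_eq, RCLike.ofReal_eq_zero]
      exact norm_ne_zero_iff.2 hy
    have hu : ‖(c⁻¹ • y : F)‖ ≤ 1 := by
      rw [norm_smul, norm_inv, hcn, inv_mul_cancel₀ (norm_ne_zero_iff.2 hy)]
    have h1 : ‖q (c⁻¹ • y)‖ ≤ ‖q‖ :=
      le_csSup (HPoly.bddAbove_image q) ⟨c⁻¹ • y, hu, rfl⟩
    obtain ⟨A, hA⟩ := q.isPoly
    have key : q y = c ^ k * q (c⁻¹ • y) := by
      rw [hA y, hA (c⁻¹ • y)]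
      have h2 := A.map_smul_univ (fun _ : Fin k => c) (fun _ : Fin k => c⁻¹ • y)
      rw [Finset.prod_const, Finset.card_univ, Fintype.card_fin] at h2
      have h3 : (fun _ : Fin k => c • c⁻¹ • y) = fun _ : Fin k => y := by
        funext i; rw [smul_smul, mul_inv_cancel₀ hc, one_smul]
      rw [h3] at h2
      rw [h2, smul_eq_mul]
    calc ‖q y‖ = ‖c‖ ^ k * ‖q (c⁻¹ • y)‖ := by rw [key, norm_mul, norm_pow]
      _ ≤ ‖y‖ ^ k * ‖q‖ := by
          rw [hcn]
          exact mul_le_mul_of_nonneg_left h1 (pow_nonneg (norm_nonneg y) k)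

/-- Evaluation at a point as a continuous linear functional on `HPoly`. -/
noncomputable def evCLM (𝕜 : Type*) [RCLike 𝕜] {k : ℕ} {F : Type*} [NormedAddCommGroup F]
    [NormedSpace 𝕜 F] (hk : 1 ≤ k) (y : F) : HPoly 𝕜 k F 𝕜 →L[𝕜] 𝕜 :=
  LinearMap.mkContinuous
    { toFun := fun q => q y
      map_add' := fun q r => rfl
      map_smul' := fun c q => rfl }
    (‖y‖ ^ k) (fun q => HPoly.norm_apply_le_s17 hk q y)

@[simp] theorem evCLM_apply {𝕜 : Type*} [RCLike 𝕜] {k : ℕ} {F : Type*} [NormedAddCommGroup F]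
    [NormedSpace 𝕜 F] (hk : 1 ≤ k) (y : F) (q : HPoly 𝕜 k F 𝕜) :
    evCLM 𝕜 hk y q = q y := rfl

end ev

theorem span_eval_eq_top (K : Type*) [Field K] {ι : Type*} (G : Submodule K (ι → K))
    [FiniteDimensional K G] :
    Submodule.span K
      (Set.range fun v : ι => ((LinearMap.proj v).comp G.subtype : G →ₗ[K] K)) = ⊤ := by
  set W := Submodule.span K
    (Set.range fun v : ι => ((LinearMap.proj v).comp G.subtype : G →ₗ[K] K)) with hW
  have hco : W.dualCoannihilator = ⊥ := by
    rw [Submodule.eq_bot_iff]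
    intro g hg
    rw [Submodule.mem_dualCoannihilator] at hg
    have hz : ∀ v : ι, (g : ι → K) v = 0 := fun v =>
      hg _ (Submodule.subset_span ⟨v, rfl⟩)
    exact Subtype.ext (funext hz)
  have h1 := Subspace.finrank_add_finrank_dualCoannihilator_eq W
  rw [hco, finrank_bot, Nat.add_zero] at h1
  apply Submodule.eq_top_of_finrank_eq
  rw [Subspace.dual_finrank_eq]
  exact h1

/-- If `P ∈ 𝒫(^mE;F)` has finite rank, then `Δₖⁿ P` is of finite type:
`(Δₖⁿ P) q = ∑ᵢ ψ_{i,1}(q) ⋯ ψ_{i,n}(q) • Rᵢ` for suitable continuous linear functionals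
`ψ_{i,j}` on `𝒫(^kF)` and polynomials `Rᵢ ∈ 𝒫(^{mnk}E)`. -/
theorem statement17 (𝕜 : Type*) [RCLike 𝕜] (E F : Type*)
    [NormedAddCommGroup E] [NormedSpace 𝕜 E] [CompleteSpace E]
    [NormedAddCommGroup F] [NormedSpace 𝕜 F] [CompleteSpace F]
    (m n k : ℕ) (hm : 1 ≤ m) (hn : 1 ≤ n) (hk : 1 ≤ k)
    (P : E → F) (hP : IsHomPoly 𝕜 m P)
    (hfr : FiniteDimensional 𝕜 (Submodule.span 𝕜 (Set.range P))) :
    ∃ (N : ℕ) (ψ : Fin N → Fin n → (HPoly 𝕜 k F 𝕜 →L[𝕜] 𝕜))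
      (R : Fin N → HPoly 𝕜 (m * n * k) E 𝕜),
      ∀ (q : HPoly 𝕜 k F 𝕜) (x : E), q (P x) ^ n = ∑ i, (∏ j, ψ i j q) * R i x := by
  classical
  obtain ⟨A, hA⟩ := hP
  haveI : FiniteDimensional 𝕜 (Submodule.span 𝕜 (Set.range P)) := hfr
  set V : Submodule 𝕜 F := Submodule.span 𝕜 (Set.range P) with hVdef
  let d := Module.finrank 𝕜 V
  let b : Module.Basis (Fin d) 𝕜 V := Module.finBasis 𝕜 V
  have hext : ∀ t : Fin d, ∃ ℓ : F →L[𝕜] 𝕜, ∀ v : V, ℓ v = b.repr v t := by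
    intro t
    obtain ⟨g, hg, -⟩ :=
      exists_extension_norm_eq V (LinearMap.toContinuousLinearMap (b.coord t))
    refine ⟨g, fun v => ?_⟩
    rw [hg v]
    simp [Module.Basis.coord_apply]
  choose ℓ hℓ using hext
  have hPmem : ∀ x, P x ∈ V := fun x => Submodule.subset_span ⟨x, rfl⟩
  let vP : E → V := fun x => ⟨P x, hPmem x⟩
  let μ : Fin d → E → 𝕜 := fun t x => b.repr (vP x) t
  have hμ : ∀ t, IsHomPoly 𝕜 m (μ t) := by
    intro t
    refine ⟨(ℓ t).compContinuousMultilinearMap A, fun x => ?_⟩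
    show b.repr (vP x) t = ℓ t (A fun _ => x)
    rw [← hA x, ← hℓ t (vP x)]
  let M : (Fin k → Fin d) → (V → 𝕜) := fun j v => ∏ i, b.repr v (j i)
  have hG : FiniteDimensional 𝕜 (Submodule.span 𝕜 (Set.range M)) :=
    FiniteDimensional.span_of_finite 𝕜 (Set.finite_range M)
  set G : Submodule 𝕜 (V → 𝕜) := Submodule.span 𝕜 (Set.range M) with hGdef
  -- every `q` restricted to `V` lies in `G`
  have hrest : ∀ q : HPoly 𝕜 k F 𝕜, ∃ gq : G, ∀ v : V, q ↑v = (gq : V → 𝕜) v := by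
    intro q
    obtain ⟨Aq, hAq⟩ := q.isPoly
    refine ⟨∑ j : Fin k → Fin d, Aq (fun i => ((b (j i) : V) : F)) •
      (⟨M j, Submodule.subset_span ⟨j, rfl⟩⟩ : G), fun v => ?_⟩
    have hv : (v : F) = ∑ t, b.repr v t • ((b t : V) : F) := by
      conv_lhs => rw [← b.sum_repr v]
      push_cast
      rfl
    calc (q : F → 𝕜) ↑v = Aq fun _ => (v : F) := hAq _
      _ = Aq fun _ => ∑ t, b.repr v t • ((b t : V) : F) := by rw [← hv]
      _ = ∑ j : Fin k → Fin d, Aq fun i => b.repr v (j i) • ((b (j i) : V) : F) :=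
          Aq.map_sum _
      _ = ∑ j : Fin k → Fin d, (∏ i, b.repr v (j i)) • Aq (fun i => ((b (j i) : V) : F)) := by
          refine Finset.sum_congr rfl fun j _ => ?_
          exact Aq.map_smul_univ _ _
      _ = _ := by
          rw [AddSubmonoidClass.coe_finset_sum]
          rw [Finset.sum_apply]
          refine Finset.sum_congr rfl fun j _ => ?_
          simp only [SetLike.val_smul, Pi.smul_apply, smul_eq_mul]
          ring
  choose gQ hgQ using hrest
  let D := Module.finrank 𝕜 G
  let bg : Module.Basis (Fin D) 𝕜 G := Module.finBasis 𝕜 G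
  have hcoordrep : ∀ r : Fin D, ∃ (nr : ℕ) (c : Fin nr → 𝕜) (vv : Fin nr → V),
      ∀ g : G, bg.coord r g = ∑ i, c i * (g : V → 𝕜) (vv i) := by
    intro r
    have hmem : bg.coord r ∈ Submodule.span 𝕜
        (Set.range fun v : V => ((LinearMap.proj v).comp G.subtype : G →ₗ[𝕜] 𝕜)) := by
      rw [span_eval_eq_top]; exact Submodule.mem_top
    rw [Submodule.mem_span_set'] at hmem
    obtain ⟨nr, c, w, hw⟩ := hmem
    choose vv hvv using fun i => (w i).2
    refine ⟨nr, c, vv, fun g => ?_⟩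
    rw [← hw, LinearMap.sum_apply]
    refine Finset.sum_congr rfl fun i _ => ?_
    rw [LinearMap.smul_apply, smul_eq_mul, ← hvv i]
    rfl
  choose nr cc vv hcoord using hcoordrep
  let ψ0 : Fin D → (HPoly 𝕜 k F 𝕜 →L[𝕜] 𝕜) := fun r => ∑ i, cc r i • evCLM 𝕜 hk ↑(vv r i)
  have hψ0 : ∀ r q, ψ0 r q = bg.coord r (gQ q) := by
    intro r q
    rw [hcoord r (gQ q)]
    simp only [ψ0, ContinuousLinearMap.sum_apply, ContinuousLinearMap.smul_apply, smul_eq_mul,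
      evCLM_apply]
    refine Finset.sum_congr rfl fun i _ => ?_
    rw [hgQ q (vv r i)]
  let S : Fin D → E → 𝕜 := fun r x => (bg r : V → 𝕜) (vP x)
  have hS : ∀ r, IsHomPoly 𝕜 (k * m) (S r) := by
    intro r
    have hmem : ((bg r : G) : V → 𝕜) ∈ Submodule.span 𝕜 (Set.range M) := (bg r).2
    rw [Submodule.mem_span_set'] at hmem
    obtain ⟨nn, c, w, hw⟩ := hmem
    choose jj hjj using fun i => (w i).2
    have hSr : S r = fun x => ∑ i, c i * ∏ t : Fin k, μ (jj i t) x := by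
      funext x
      show ((bg r : G) : V → 𝕜) (vP x) = _
      rw [← hw, Finset.sum_apply]
      refine Finset.sum_congr rfl fun i _ => ?_
      rw [Pi.smul_apply, smul_eq_mul, ← hjj i]
    rw [hSr]
    refine isHomPoly_sum Finset.univ _ fun i _ => ?_
    exact IsHomPoly.smulc (c i) (isHomPoly_prod m k (fun t => μ (jj i t)) fun t => hμ _)
  have hkey : ∀ (q : HPoly 𝕜 k F 𝕜) (x : E), (q (P x) : 𝕜) = ∑ r, ψ0 r q * S r x := by
    intro q x
    have h1 : (q (P x) : 𝕜) = (gQ q : V → 𝕜) (vP x) := hgQ q (vP x)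
    rw [h1]
    conv_lhs => rw [← bg.sum_repr (gQ q)]
    rw [AddSubmonoidClass.coe_finset_sum, Finset.sum_apply]
    refine Finset.sum_congr rfl fun r _ => ?_
    rw [hψ0 r q, SetLike.val_smul, Pi.smul_apply, smul_eq_mul, Module.Basis.coord_apply]
  let e := Fintype.equivFin (Fin n → Fin D)
  refine ⟨Fintype.card (Fin n → Fin D), fun i a => ψ0 (e.symm i a), fun i =>
    ⟨fun x => ∏ a : Fin n, S (e.symm i a) x,
      IsHomPoly.cast (by ring)
        (isHomPoly_prod (k * m) n (fun a => S (e.symm i a)) fun a => hS _)⟩, ?_⟩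
  intro q x
  have hexp : (q (P x) : 𝕜) ^ n = ∑ f : Fin n → Fin D, (∏ a, ψ0 (f a) q) * ∏ a, S (f a) x := by
    rw [hkey q x]
    have hpow : ∀ z : 𝕜, z ^ n = ∏ _a : Fin n, z := fun z => by
      rw [Finset.prod_const, Finset.card_univ, Fintype.card_fin]
    rw [hpow, Finset.prod_univ_sum]
    refine Finset.sum_congr rfl fun f _ => ?_
    rw [Finset.prod_mul_distrib]
  rw [hexp]
  refine Fintype.sum_equiv e _ _ fun f => ?_
  simp only [Equiv.symm_apply_apply]
  rfl
end
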